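/- Let l ≥ |Y| ≥ 2 and let p, p̃ be p.m.f.s on finite Y with min values ≥ 1/l. Then the Kullback–Leibler divergences satisfy |D(p̃‖p) − D(Φ_l p̃ ‖ Φ_l p)| ≤ 2(|Y|+1) · (log₂ l)²/l, where Φ_l is the log-uniform pmf quantizer. -/

import Mathlib

theorem stmt11 {Y : Type*} [Fintype Y] (l : ℕ) (hY2 : 2 ≤ Fintype.card Y)
    (hlY : Fintype.card Y ≤ l)
    (p pt Φp Φpt : Y → ℝ)
    (hp : ∀ y, (1 : ℝ) / l ≤ p y) (hp1 : ∑ y, p y = 1)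
    (hpt : ∀ y, (1 : ℝ) / l ≤ pt y) (hpt1 : ∑ y, pt y = 1)
    (hΦp : ∀ y, (1 : ℝ) / l ≤ Φp y) (hΦp1 : ∑ y, Φp y = 1)
    (hΦpt : ∀ y, (1 : ℝ) / l ≤ Φpt y) (hΦpt1 : ∑ y, Φpt y = 1)
    (hlog1 : ∀ y, |Real.logb 2 (Φp y / p y)| ≤ Real.logb 2 l / l)
    (hlog2 : ∀ y, |Real.logb 2 (Φpt y / pt y)| ≤ Real.logb 2 l / l)
    (htv : ∑ y, |pt y - Φpt y| ≤ ((Fintype.card Y : ℝ) + 1) * Real.log l / l) :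
    |(∑ y, pt y * Real.logb 2 (pt y / p y))
        - (∑ y, Φpt y * Real.logb 2 (Φpt y / Φp y))|
      ≤ 2 * ((Fintype.card Y : ℝ) + 1) * (Real.logb 2 l) ^ 2 / l := by
  have hl2 : (2:ℕ) ≤ l := le_trans hY2 hlY
  have hlR : (2:ℝ) ≤ (l:ℝ) := by exact_mod_cast hl2
  have hl0 : (0:ℝ) < l := by linarith
  have hinv : (0:ℝ) < 1/l := by positivity
  have hppos : ∀ y, 0 < p y := fun y => lt_of_lt_of_le hinv (hp y)
  have hptpos : ∀ y, 0 < pt y := fun y => lt_of_lt_of_le hinv (hpt y)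
  have hΦppos : ∀ y, 0 < Φp y := fun y => lt_of_lt_of_le hinv (hΦp y)
  have hΦptpos : ∀ y, 0 < Φpt y := fun y => lt_of_lt_of_le hinv (hΦpt y)
  set L := Real.logb 2 l with hLdef
  have hL1 : 1 ≤ L := by
    rw [hLdef, Real.le_logb_iff_rpow_le (by norm_num) (by linarith)]
    simpa using hlR
  have hT0 : 0 ≤ Real.log l := Real.log_nonneg (by linarith)
  have hTL : Real.log l ≤ L := by
    rw [hLdef, Real.logb, le_div_iff₀ (Real.log_pos one_lt_two)]
    nlinarith [Real.log_two_lt_d9, hT0]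
  -- each Φp y, Φpt y ≤ 1
  have hΦple : ∀ y, Φp y ≤ 1 := by
    intro y
    rw [← hΦp1]
    exact Finset.single_le_sum (fun z _ => (hΦppos z).le) (Finset.mem_univ y)
  have hΦptle : ∀ y, Φpt y ≤ 1 := by
    intro y
    rw [← hΦpt1]
    exact Finset.single_le_sum (fun z _ => (hΦptpos z).le) (Finset.mem_univ y)
  -- |logb 2 (Φpt/Φp)| ≤ L
  have hbound : ∀ y, |Real.logb 2 (Φpt y / Φp y)| ≤ L := by
    intro y
    have h1 : Φpt y / Φp y ≤ l := by
      rw [div_le_iff₀ (hΦppos y)]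
      calc Φpt y ≤ 1 := hΦptle y
        _ = (l:ℝ) * (1/l) := by field_simp
        _ ≤ (l:ℝ) * Φp y := by
            exact mul_le_mul_of_nonneg_left (hΦp y) (by linarith)
    have h2 : (1:ℝ)/l ≤ Φpt y / Φp y := by
      rw [div_le_div_iff₀ hl0 (hΦppos y)]
      calc (1:ℝ) * Φp y ≤ 1 := by simpa using hΦple y
        _ = (1/l) * l := by field_simp
        _ ≤ Φpt y * l := by
            exact mul_le_mul_of_nonneg_right (hΦpt y) (by linarith)
    rw [abs_le]
    constructor
    · have h3 : Real.logb 2 (1/l) ≤ Real.logb 2 (Φpt y / Φp y) :=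
        Real.logb_le_logb_of_le (by norm_num) hinv h2
      rw [one_div, Real.logb_inv, ← hLdef] at h3
      linarith
    · calc Real.logb 2 (Φpt y / Φp y) ≤ Real.logb 2 l :=
          Real.logb_le_logb_of_le (by norm_num) (div_pos (hΦptpos y) (hΦppos y)) h1
        _ = L := rfl
  -- termwise decomposition
  have hterm : ∀ y, pt y * Real.logb 2 (pt y / p y) - Φpt y * Real.logb 2 (Φpt y / Φp y)
      = pt y * Real.logb 2 (Φp y / p y) - pt y * Real.logb 2 (Φpt y / pt y)
        + (pt y - Φpt y) * Real.logb 2 (Φpt y / Φp y) := by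
    intro y
    rw [Real.logb_div (hptpos y).ne' (hppos y).ne',
        Real.logb_div (hΦptpos y).ne' (hΦppos y).ne',
        Real.logb_div (hΦppos y).ne' (hppos y).ne',
        Real.logb_div (hΦptpos y).ne' (hptpos y).ne']
    ring
  set A := ∑ y, pt y * Real.logb 2 (Φp y / p y) with hAdef
  set B := ∑ y, pt y * Real.logb 2 (Φpt y / pt y) with hBdef
  set C := ∑ y, (pt y - Φpt y) * Real.logb 2 (Φpt y / Φp y) with hCdef
  have hsplit : (∑ y, pt y * Real.logb 2 (pt y / p y))
      - (∑ y, Φpt y * Real.logb 2 (Φpt y / Φp y)) = A - B + C := by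
    rw [← Finset.sum_sub_distrib, hAdef, hBdef, hCdef,
        ← Finset.sum_sub_distrib, ← Finset.sum_add_distrib]
    exact Finset.sum_congr rfl fun y _ => hterm y
  have hA : |A| ≤ L / l := by
    calc |A| ≤ ∑ y, |pt y * Real.logb 2 (Φp y / p y)| :=
        Finset.abs_sum_le_sum_abs _ _
      _ ≤ ∑ y, pt y * (L / l) := by
          refine Finset.sum_le_sum fun y _ => ?_
          rw [abs_mul, abs_of_pos (hptpos y)]
          exact mul_le_mul_of_nonneg_left (hlog1 y) (hptpos y).le
      _ = L / l := by rw [← Finset.sum_mul, hpt1, one_mul]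
  have hB : |B| ≤ L / l := by
    calc |B| ≤ ∑ y, |pt y * Real.logb 2 (Φpt y / pt y)| :=
        Finset.abs_sum_le_sum_abs _ _
      _ ≤ ∑ y, pt y * (L / l) := by
          refine Finset.sum_le_sum fun y _ => ?_
          rw [abs_mul, abs_of_pos (hptpos y)]
          exact mul_le_mul_of_nonneg_left (hlog2 y) (hptpos y).le
      _ = L / l := by rw [← Finset.sum_mul, hpt1, one_mul]
  have hC : |C| ≤ (((Fintype.card Y : ℝ) + 1) * Real.log l / l) * L := by
    calc |C| ≤ ∑ y, |(pt y - Φpt y) * Real.logb 2 (Φpt y / Φp y)| :=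
        Finset.abs_sum_le_sum_abs _ _
      _ ≤ ∑ y, |pt y - Φpt y| * L := by
          refine Finset.sum_le_sum fun y _ => ?_
          rw [abs_mul]
          exact mul_le_mul_of_nonneg_left (hbound y) (abs_nonneg _)
      _ = (∑ y, |pt y - Φpt y|) * L := by rw [Finset.sum_mul]
      _ ≤ (((Fintype.card Y : ℝ) + 1) * Real.log l / l) * L :=
          mul_le_mul_of_nonneg_right htv (by linarith)
  have hK : (2:ℝ) ≤ (Fintype.card Y : ℝ) := by exact_mod_cast hY2
  have habs : |A - B + C| ≤ |A| + |B| + |C| :=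
    (abs_add_le _ _).trans (add_le_add_left (abs_sub _ _) _)
  rw [hsplit]
  calc |A - B + C| ≤ L/l + L/l + (((Fintype.card Y : ℝ) + 1) * Real.log l / l) * L := by
        refine habs.trans ?_
        exact add_le_add (add_le_add hA hB) hC
    _ = (2 * L + ((Fintype.card Y : ℝ) + 1) * Real.log l * L) / l := by ring
    _ ≤ (2 * ((Fintype.card Y : ℝ) + 1) * L ^ 2) / l := by
        gcongr
        nlinarith [mul_le_mul_of_nonneg_left hTL
          (mul_nonneg (by linarith : (0:ℝ) ≤ (Fintype.card Y : ℝ) + 1) (by linarith : (0:ℝ) ≤ L)),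
          hK, hL1]
    _ = 2 * ((Fintype.card Y : ℝ) + 1) * L ^ 2 / l := by ring
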